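/- Schatten-norm triangle-type bound for marginals implies improved subadditivity: let ρ_AB be a bipartite density operator satisfying ‖ρ_A‖₂ + ‖ρ_B‖₂ ≤ 1 + ‖ρ_AB‖₂ (Audenaert's inequality with q=2), and suppose √(1−S_L(ρ_A)) + √(1−S_L(ρ_B)) ≥ 1. Then S_L(ρ_AB) ≤ S_L(ρ_A) + S_L(ρ_B) − 2(1−√(1−S_L(ρ_A)))(1−√(1−S_L(ρ_B))), and the right-hand side is at most S_L(ρ_A)+S_L(ρ_B). -/

import Mathlib

open Matrix
open scoped ComplexOrder

noncomputable def linEntropy {n : Type*} [Fintype n] (ρ : Matrix n n ℂ) : ℝ :=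
  1 - ((ρ * ρ).trace).re

noncomputable def ptraceB {dA dB : ℕ} (ρ : Matrix (Fin dA × Fin dB) (Fin dA × Fin dB) ℂ) :
    Matrix (Fin dA) (Fin dA) ℂ := fun i j => ∑ k, ρ (i, k) (j, k)

noncomputable def ptraceA {dA dB : ℕ} (ρ : Matrix (Fin dA × Fin dB) (Fin dA × Fin dB) ℂ) :
    Matrix (Fin dB) (Fin dB) ℂ := fun i j => ∑ k, ρ (k, i) (k, j)


section helpers
variable {n : Type*} [Fintype n] [DecidableEq n]

lemma psd_diag {σ : Matrix n n ℂ} (h : σ.PosSemidef) (i : n) :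
    0 ≤ (σ i i).re ∧ (σ i i).im = 0 := by
  have h1 := h.dotProduct_mulVec_nonneg (Pi.single i 1)
  have h2 : star (Pi.single i (1:ℂ)) ⬝ᵥ σ.mulVec (Pi.single i 1) = σ i i := by
    simp [Matrix.mulVec_single, dotProduct, Pi.single_apply,
      apply_ite (star : ℂ → ℂ)]
  rw [h2] at h1
  obtain ⟨hre, him⟩ := Complex.le_def.mp h1
  exact ⟨by simpa using hre, by simpa using him.symm⟩

lemma psd_diag_re_nonneg {σ : Matrix n n ℂ} (h : σ.PosSemidef) (i : n) :
    0 ≤ (σ i i).re := (psd_diag h i).1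

lemma psd_entry_sq {σ : Matrix n n ℂ} (h : σ.PosSemidef) (i j : n) :
    Complex.normSq (σ i j) ≤ (σ i i).re * (σ j j).re := by
  rcases eq_or_ne i j with rfl | hij
  · obtain ⟨hre, him⟩ := psd_diag h i
    rw [Complex.normSq_apply, him]
    nlinarith
  · set s := σ i j with hs
    have hji : σ j i = (starRingEnd ℂ) s := by
      simpa [Matrix.conjTranspose_apply] using (congrFun (congrFun h.1 j) i).symm
    have hconj : (starRingEnd ℂ) s * s = (Complex.normSq s : ℂ) := by
      rw [mul_comm]; exact Complex.mul_conj s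
    have key : ∀ t : ℝ, 0 ≤ (Complex.normSq s * (σ i i).re) * (t * t)
        + (-(2 * Complex.normSq s)) * t + (σ j j).re := by
      intro t
      set x : n → ℂ := Pi.single i (-(t:ℂ) * s) + Pi.single j 1 with hx
      have h1 := h.dotProduct_mulVec_nonneg x
      have h2 : star x ⬝ᵥ σ.mulVec x =
          (((Complex.normSq s : ℝ) : ℂ) * (σ i i)) * ((t:ℂ)*(t:ℂ))
          + (-(2 * ((Complex.normSq s : ℝ) : ℂ))) * (t:ℂ) + σ j j := by
        rw [hx]
        simp only [star_add, Matrix.mulVec_add, add_dotProduct,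
          dotProduct_add, Matrix.mulVec_single, single_dotProduct,
          star_mul', star_neg, Complex.star_def, Complex.conj_ofReal, star_one]
        have e1 : star (Pi.single i (-(t:ℂ) * s)) ⬝ᵥ (fun k => σ k i * (-(t:ℂ) * s)) =
            (starRingEnd ℂ) (-(t:ℂ) * s) * (σ i i * (-(t:ℂ) * s)) := by
          simp [dotProduct, Pi.single_apply, apply_ite (star : ℂ → ℂ)]
        have e2 : star (Pi.single i (-(t:ℂ) * s)) ⬝ᵥ (fun k => σ k j * 1) =
            (starRingEnd ℂ) (-(t:ℂ) * s) * (σ i j * 1) := by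
          simp [dotProduct, Pi.single_apply, apply_ite (star : ℂ → ℂ)]
        have e3 : star (Pi.single j (1:ℂ)) ⬝ᵥ (fun k => σ k i * (-(t:ℂ) * s)) =
            σ j i * (-(t:ℂ) * s) := by
          simp [dotProduct, Pi.single_apply, apply_ite (star : ℂ → ℂ)]
        have e4 : star (Pi.single j (1:ℂ)) ⬝ᵥ (fun k => σ k j * 1) = σ j j := by
          simp [dotProduct, Pi.single_apply, apply_ite (star : ℂ → ℂ)]
        have hcol : ∀ (k : n) (c : ℂ), MulOpposite.op c • σ.col k = fun l => σ l k * c :=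
          fun k c => funext fun l => rfl
        simp only [hcol]
        rw [e1, e2, e3, e4, hji, ← hs]
        have expand : (starRingEnd ℂ) (-(t:ℂ) * s) = -(t:ℂ) * (starRingEnd ℂ) s := by
          simp [Complex.conj_ofReal]
        rw [expand]
        calc -(t:ℂ) * (starRingEnd ℂ) s * (σ i i * (-(t:ℂ) * s))
              + (starRingEnd ℂ) s * (-(t:ℂ) * s)
              + (-(t:ℂ) * (starRingEnd ℂ) s * (s * 1) + σ j j)
            = ((starRingEnd ℂ) s * s) * σ i i * ((t:ℂ)*(t:ℂ))
              - 2 * ((starRingEnd ℂ) s * s) * (t:ℂ) + σ j j := by ring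
          _ = _ := by rw [hconj]; ring
      rw [h2] at h1
      have h3 := (Complex.le_def.mp h1).1
      simpa [Complex.add_re, Complex.mul_re, Complex.mul_im, Complex.ofReal_re,
        Complex.ofReal_im] using h3
    have hd := discrim_le_zero key
    unfold discrim at hd
    have hii := psd_diag_re_nonneg h i
    have hjj := psd_diag_re_nonneg h j
    rcases eq_or_lt_of_le (Complex.normSq_nonneg s) with h0 | h0
    · rw [← h0]; exact mul_nonneg hii hjj
    · nlinarith [hd, h0]

omit [DecidableEq n] in
lemma trace_sq_eq {σ : Matrix n n ℂ} (h : σ.IsHermitian) :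
    ((σ * σ).trace).re = ∑ i, ∑ j, Complex.normSq (σ i j) := by
  have key : (σ * σ).trace = ((∑ i, ∑ j, Complex.normSq (σ i j) : ℝ) : ℂ) := by
    push_cast
    rw [Matrix.trace]
    refine Finset.sum_congr rfl fun i _ => ?_
    simp only [Matrix.diag_apply, Matrix.mul_apply]
    refine Finset.sum_congr rfl fun j _ => ?_
    have hji : σ j i = (starRingEnd ℂ) (σ i j) := by
      simpa [Matrix.conjTranspose_apply] using (congrFun (congrFun h.symm j) i)
    rw [hji, Complex.mul_conj]
  rw [key, Complex.ofReal_re]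

omit [DecidableEq n] in
lemma trace_sq_nonneg {σ : Matrix n n ℂ} (h : σ.IsHermitian) :
    0 ≤ ((σ * σ).trace).re := by
  rw [trace_sq_eq h]
  exact Finset.sum_nonneg fun i _ => Finset.sum_nonneg fun j _ => Complex.normSq_nonneg _

lemma purity_le_one {σ : Matrix n n ℂ} (h : σ.PosSemidef) (htr : σ.trace = 1) :
    ((σ * σ).trace).re ≤ 1 := by
  rw [trace_sq_eq h.1]
  have hdiag : ∑ i, (σ i i).re = 1 := by
    have h1 : (σ.trace).re = 1 := by rw [htr]; simp
    rw [← h1, Matrix.trace, Complex.re_sum]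
    rfl
  calc ∑ i, ∑ j, Complex.normSq (σ i j)
      ≤ ∑ i, ∑ j, (σ i i).re * (σ j j).re :=
        Finset.sum_le_sum fun i _ => Finset.sum_le_sum fun j _ => psd_entry_sq h i j
    _ = (∑ i, (σ i i).re) * (∑ j, (σ j j).re) := by rw [Finset.sum_mul_sum]
    _ = 1 := by rw [hdiag]; ring
end helpers

section ptrace
variable {dA dB : ℕ}

lemma ptraceB_posSemidef {ρ : Matrix (Fin dA × Fin dB) (Fin dA × Fin dB) ℂ}
    (h : ρ.PosSemidef) : (ptraceB ρ).PosSemidef := by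
  refine Matrix.PosSemidef.of_dotProduct_mulVec_nonneg ?_ ?_
  · ext i j
    simp only [Matrix.conjTranspose_apply, ptraceB, star_sum]
    refine Finset.sum_congr rfl fun k _ => ?_
    simpa [Matrix.conjTranspose_apply] using (congrFun (congrFun h.1 (i,k)) (j,k))
  · intro x
    have aux : ∀ k : Fin dB,
        star (fun p : Fin dA × Fin dB => if p.2 = k then x p.1 else 0)
          ⬝ᵥ ρ.mulVec (fun p : Fin dA × Fin dB => if p.2 = k then x p.1 else 0)
        = ∑ i, ∑ j, star (x i) * (ρ (i,k) (j,k) * x j) := by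
      intro k
      simp only [dotProduct, Matrix.mulVec, Pi.star_apply, Fintype.sum_prod_type,
        apply_ite (star : ℂ → ℂ), star_zero, ite_mul, zero_mul, mul_ite, mul_zero,
        Finset.sum_const_zero, Finset.sum_ite_irrel, Finset.sum_ite_eq',
        Finset.mem_univ, if_true, Finset.mul_sum]
    have key : star x ⬝ᵥ (ptraceB ρ).mulVec x =
        ∑ k : Fin dB, ∑ i, ∑ j, star (x i) * (ρ (i,k) (j,k) * x j) := by
      simp only [dotProduct, Matrix.mulVec, Pi.star_apply, ptraceB]
      calc ∑ i, star (x i) * ∑ j, (∑ k, ρ (i,k) (j,k)) * x j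
          = ∑ i, ∑ k, ∑ j, star (x i) * (ρ (i,k) (j,k) * x j) := by
            refine Finset.sum_congr rfl fun i _ => ?_
            simp only [Finset.mul_sum, Finset.sum_mul]
            rw [Finset.sum_comm]
        _ = _ := Finset.sum_comm
    rw [key]
    refine Finset.sum_nonneg fun k _ => ?_
    have := h.dotProduct_mulVec_nonneg (fun p : Fin dA × Fin dB => if p.2 = k then x p.1 else 0)
    rwa [aux k] at this

lemma ptraceA_posSemidef {ρ : Matrix (Fin dA × Fin dB) (Fin dA × Fin dB) ℂ}
    (h : ρ.PosSemidef) : (ptraceA ρ).PosSemidef := by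
  refine Matrix.PosSemidef.of_dotProduct_mulVec_nonneg ?_ ?_
  · ext i j
    simp only [Matrix.conjTranspose_apply, ptraceA, star_sum]
    refine Finset.sum_congr rfl fun k _ => ?_
    simpa [Matrix.conjTranspose_apply] using (congrFun (congrFun h.1 (k,i)) (k,j))
  · intro x
    have aux : ∀ k : Fin dA,
        star (fun p : Fin dA × Fin dB => if p.1 = k then x p.2 else 0)
          ⬝ᵥ ρ.mulVec (fun p : Fin dA × Fin dB => if p.1 = k then x p.2 else 0)
        = ∑ i, ∑ j, star (x i) * (ρ (k,i) (k,j) * x j) := by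
      intro k
      simp only [dotProduct, Matrix.mulVec, Pi.star_apply, Fintype.sum_prod_type,
        apply_ite (star : ℂ → ℂ), star_zero, ite_mul, zero_mul, mul_ite, mul_zero,
        Finset.sum_const_zero, Finset.sum_ite_irrel, Finset.sum_ite_eq',
        Finset.mem_univ, if_true, Finset.mul_sum]
    have key : star x ⬝ᵥ (ptraceA ρ).mulVec x =
        ∑ k : Fin dA, ∑ i, ∑ j, star (x i) * (ρ (k,i) (k,j) * x j) := by
      simp only [dotProduct, Matrix.mulVec, Pi.star_apply, ptraceA]
      calc ∑ i, star (x i) * ∑ j, (∑ k, ρ (k,i) (k,j)) * x j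
          = ∑ i, ∑ k, ∑ j, star (x i) * (ρ (k,i) (k,j) * x j) := by
            refine Finset.sum_congr rfl fun i _ => ?_
            simp only [Finset.mul_sum, Finset.sum_mul]
            rw [Finset.sum_comm]
        _ = _ := Finset.sum_comm
    rw [key]
    refine Finset.sum_nonneg fun k _ => ?_
    have := h.dotProduct_mulVec_nonneg (fun p : Fin dA × Fin dB => if p.1 = k then x p.2 else 0)
    rwa [aux k] at this

lemma ptraceB_trace (ρ : Matrix (Fin dA × Fin dB) (Fin dA × Fin dB) ℂ) :
    (ptraceB ρ).trace = ρ.trace := by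
  simp only [Matrix.trace, Matrix.diag_apply, ptraceB, Fintype.sum_prod_type]

lemma ptraceA_trace (ρ : Matrix (Fin dA × Fin dB) (Fin dA × Fin dB) ℂ) :
    (ptraceA ρ).trace = ρ.trace := by
  simp only [Matrix.trace, Matrix.diag_apply, ptraceA, Fintype.sum_prod_type]
  exact Finset.sum_comm

end ptrace

/-- Audenaert's Schatten-2-norm inequality
`‖ρ_A‖₂ + ‖ρ_B‖₂ ≤ 1 + ‖ρ_AB‖₂` together with `√(1-S_L(ρ_A)) + √(1-S_L(ρ_B)) ≥ 1`
implies `S_L(ρ_AB) ≤ S_L(ρ_A) + S_L(ρ_B) - 2(1-√(1-S_L(ρ_A)))(1-√(1-S_L(ρ_B)))`, and this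
right-hand side is at most `S_L(ρ_A) + S_L(ρ_B)`. -/
theorem audenaert_improved_subadditivity (dA dB : ℕ) (hA : 2 ≤ dA) (hB : 2 ≤ dB)
    (ρ : Matrix (Fin dA × Fin dB) (Fin dA × Fin dB) ℂ)
    (hρ : ρ.PosSemidef) (hρtr : ρ.trace = 1)
    (hAud : Real.sqrt (((ptraceB ρ * ptraceB ρ).trace).re)
        + Real.sqrt (((ptraceA ρ * ptraceA ρ).trace).re)
        ≤ 1 + Real.sqrt (((ρ * ρ).trace).re))
    (hpos : Real.sqrt (1 - linEntropy (ptraceB ρ))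
        + Real.sqrt (1 - linEntropy (ptraceA ρ)) ≥ 1) :
    linEntropy ρ ≤ linEntropy (ptraceB ρ) + linEntropy (ptraceA ρ)
      - 2 * (1 - Real.sqrt (1 - linEntropy (ptraceB ρ)))
        * (1 - Real.sqrt (1 - linEntropy (ptraceA ρ))) ∧
    linEntropy (ptraceB ρ) + linEntropy (ptraceA ρ)
      - 2 * (1 - Real.sqrt (1 - linEntropy (ptraceB ρ)))
        * (1 - Real.sqrt (1 - linEntropy (ptraceA ρ)))
      ≤ linEntropy (ptraceB ρ) + linEntropy (ptraceA ρ) := by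
  have hAps := ptraceB_posSemidef hρ
  have hBps := ptraceA_posSemidef hρ
  have htrA : (ptraceB ρ).trace = 1 := by rw [ptraceB_trace, hρtr]
  have htrB : (ptraceA ρ).trace = 1 := by rw [ptraceA_trace, hρtr]
  set tA := ((ptraceB ρ * ptraceB ρ).trace).re with htA
  set tB := ((ptraceA ρ * ptraceA ρ).trace).re with htB
  set tC := ((ρ * ρ).trace).re with htC
  have h0A : 0 ≤ tA := trace_sq_nonneg hAps.1
  have h0B : 0 ≤ tB := trace_sq_nonneg hBps.1
  have h0C : 0 ≤ tC := trace_sq_nonneg hρ.1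
  have h1A : tA ≤ 1 := purity_le_one hAps htrA
  have h1B : tB ≤ 1 := purity_le_one hBps htrB
  have hentA : 1 - linEntropy (ptraceB ρ) = tA := by simp [linEntropy, htA]
  have hentB : 1 - linEntropy (ptraceA ρ) = tB := by simp [linEntropy, htB]
  rw [hentA, hentB] at hpos ⊢
  set a := Real.sqrt tA with ha
  set b := Real.sqrt tB with hb
  set c := Real.sqrt tC with hc
  have ha2 : a * a = tA := Real.mul_self_sqrt h0A
  have hb2 : b * b = tB := Real.mul_self_sqrt h0B
  have hc2 : c * c = tC := Real.mul_self_sqrt h0C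
  have ha0 : 0 ≤ a := Real.sqrt_nonneg _
  have hb0 : 0 ≤ b := Real.sqrt_nonneg _
  have hc0 : 0 ≤ c := Real.sqrt_nonneg _
  have ha1 : a ≤ 1 := Real.sqrt_le_one.mpr h1A
  have hb1 : b ≤ 1 := Real.sqrt_le_one.mpr h1B
  have habc : a + b ≤ 1 + c := hAud
  have hsum : 1 ≤ a + b := hpos
  have hsq : (a + b - 1) * (a + b - 1) ≤ c * c :=
    mul_le_mul (by linarith) (by linarith) (by linarith) hc0
  constructor
  · simp only [linEntropy, ← htA, ← htB, ← htC]
    nlinarith [hsq, ha2, hb2, hc2]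
  · nlinarith [mul_nonneg (by linarith : (0:ℝ) ≤ 1 - a) (by linarith : (0:ℝ) ≤ 1 - b)]
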